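/- Let ε ∈ R^× be a unit in an unramified dyadic local ring R. Then ℍ ⊥ ⟨ε⟩ is isometric to ⟨1, -1, ε⟩, and ℍ ⊥ ⟨ε⟩ primitively represents every binary R-lattice of the form ⟨α, ε⟩ for any α ∈ R. In particular, ℍ ⊥ ⟨ε⟩ is primitively 1-universal. -/

import Mathlib

open Matrix IsLocalRing

def PrimRep {R : Type*} [CommRing R] {ι κ : Type*} [Fintype ι] [Fintype κ] [DecidableEq κ]
    (G : Matrix κ κ R) (H : Matrix ι ι R) : Prop :=
  ∃ T : Matrix ι κ R, Tᵀ * H * T = G ∧ ∃ P : Matrix κ ι R, P * T = 1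

/-- Key arithmetic lemma: in an unramified dyadic local ring, every element is
`ε * z ^ 2 + 2 * s` for a fixed unit `ε`. -/
theorem key_rep {R : Type*} [CommRing R] [IsDomain R] [IsDiscreteValuationRing R]
    [Finite (IsLocalRing.ResidueField R)]
    (h2 : Prime (2 : R)) (ε : Rˣ) (γ : R) : ∃ z s : R, γ = ε * z ^ 2 + 2 * s := by
  have hmax : maximalIdeal R = Ideal.span {(2 : R)} := h2.irreducible.maximalIdeal_eq
  set k := ResidueField R
  have h2k : (2 : k) = 0 := by
    have h : residue R 2 = 0 :=
      Ideal.Quotient.eq_zero_iff_mem.mpr (hmax ▸ Ideal.mem_span_singleton_self 2)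
    rwa [map_ofNat] at h
  have hsq : Function.Surjective (fun x : k => x ^ 2) := by
    rw [← Finite.injective_iff_surjective]
    intro x y hxy
    simp only at hxy
    have hxy2 : (x + y) ^ 2 = 0 := by
      linear_combination hxy + (x * y + y ^ 2) * h2k
    have hx : x + y = 0 := pow_eq_zero_iff (n := 2) (by norm_num) |>.mp hxy2
    have hy : y + y = 0 := by linear_combination y * h2k
    linear_combination hx - hy
  obtain ⟨zb, hzb⟩ := hsq (residue R (γ * ((ε⁻¹ : Rˣ) : R)))
  simp only at hzb
  obtain ⟨z, hz⟩ := Ideal.Quotient.mk_surjective zb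
  have hz' : residue R z = zb := hz
  have hu : (ε : R) * ((ε⁻¹ : Rˣ) : R) = 1 := by exact_mod_cast ε.mul_inv
  have hmem : γ - ε * z ^ 2 ∈ maximalIdeal R := by
    rw [← Ideal.Quotient.eq_zero_iff_mem]
    have hrw : residue R (γ - ε * z ^ 2) = 0 := by
      rw [map_sub, _root_.map_mul, map_pow, hz', hzb, ← _root_.map_mul, ← map_sub,
        show γ - (ε : R) * (γ * ((ε⁻¹ : Rˣ) : R)) = 0 from by linear_combination (-γ) * hu]
      exact map_zero _
    exact hrw
  rw [hmax, Ideal.mem_span_singleton] at hmem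
  obtain ⟨s, hs⟩ := hmem
  exact ⟨z, s, by linear_combination hs⟩

theorem hyp_perp_unit_isometric_and_primitively_one_universal
    (R : Type*) [CommRing R] [IsDomain R] [IsDiscreteValuationRing R]
    [IsAdicComplete (IsLocalRing.maximalIdeal R) R]
    [Finite (IsLocalRing.ResidueField R)]
    (h2 : Prime (2 : R)) (ε : Rˣ) :
    (∃ T : Matrix (Fin 3) (Fin 3) R, IsUnit T.det ∧
        Tᵀ * !![0, 1, 0; 1, 0, 0; 0, 0, (ε : R)] * T = !![1, 0, 0; 0, -1, 0; 0, 0, (ε : R)]) ∧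
      (∀ α : R, PrimRep (!![α, 0; 0, (ε : R)] : Matrix (Fin 2) (Fin 2) R)
        (!![0, 1, 0; 1, 0, 0; 0, 0, (ε : R)] : Matrix (Fin 3) (Fin 3) R)) ∧
      (∀ β : R, β ≠ 0 → PrimRep (!![β] : Matrix (Fin 1) (Fin 1) R)
        (!![0, 1, 0; 1, 0, 0; 0, 0, (ε : R)] : Matrix (Fin 3) (Fin 3) R)) := by
  refine ⟨?_, ?_, ?_⟩
  · -- isometry part: ε * a ^ 2 = 1 + 2 * u with u := -s
    obtain ⟨a, s, ha⟩ := key_rep h2 ε 1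
    refine ⟨!![-(-s), -(-s) - 1, -(ε : R) * a; 1, 1, 0; a, a, 1], ?_, ?_⟩
    · have hdet : det !![-(-s), -(-s) - 1, -(ε : R) * a; 1, 1, 0; a, a, 1] = 1 := by
        simp [Matrix.det_fin_three]; try ring
      rw [hdet]; exact isUnit_one
    · ext i j
      fin_cases i <;> fin_cases j <;>
        simp [Matrix.mul_apply, Fin.sum_univ_succ, Matrix.vecHead, Matrix.vecTail] <;>
          first
          | ring1
          | linear_combination ha
          | linear_combination -ha
          | linear_combination (2:R) * ha
          | linear_combination (-2:R) * ha
  · intro α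
    obtain ⟨z, s, hα⟩ := key_rep h2 ε α
    refine ⟨!![1, 0; s, -(ε : R) * z; z, 1], ?_, !![1, 0, 0; -z, 0, 1], ?_⟩
    · ext i j
      fin_cases i <;> fin_cases j <;>
        simp [Matrix.mul_apply, Fin.sum_univ_succ, Matrix.vecHead, Matrix.vecTail] <;>
          first
          | ring1
          | linear_combination hα
          | linear_combination -hα
          | linear_combination (2:R) * hα
          | linear_combination (-2:R) * hα
    · ext i j
      fin_cases i <;> fin_cases j <;> simp [Matrix.mul_apply, Fin.sum_univ_succ, Matrix.vecHead, Matrix.vecTail]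
  · intro β _
    obtain ⟨z, s, hβ⟩ := key_rep h2 ε β
    refine ⟨!![1; s; z], ?_, !![1, 0, 0], ?_⟩
    · ext i j
      fin_cases i <;> fin_cases j <;>
        simp [Matrix.mul_apply, Fin.sum_univ_succ, Matrix.vecHead, Matrix.vecTail] <;>
          first
          | ring1
          | linear_combination hβ
          | linear_combination -hβ
          | linear_combination (2:R) * hβ
          | linear_combination (-2:R) * hβ
    · ext i j
      fin_cases i <;> fin_cases j <;> simp [Matrix.mul_apply, Fin.sum_univ_succ, Matrix.vecHead, Matrix.vecTail]
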